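/- For every finite-communication algorithm of class 𝓛 (with arbitrarily many colors), Rendezvous is unsolvable in ASynch: there exist distinct initial positions and a legal fair asynchronous execution under which the two robots, both with light initially set to c₀, never occupy the same point, so rendezvous is never solved. -/

import Mathlib

/-- Points in the plane. -/
abbrev Pt := EuclideanSpace ℝ (Fin 2)

/-- The raw data of an asynchronous execution of two finite-communication
robots with light colors in `C` (robot `r` is `false`, robot `s` is `true`):
for each robot `i` and each cycle `k`, the instantaneous Look time
`look i k`, the end time `compEnd i k` of the Compute phase (at which the
robot's light is instantaneously set), and the end time `moveEnd i k` of the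
Move phase; together with the trajectories `pos` and light histories `light`
of the two robots over global time. -/
structure AsyncExec (C : Type*) where
  look : Bool → ℕ → ℝ
  compEnd : Bool → ℕ → ℝ
  moveEnd : Bool → ℕ → ℝ
  pos : Bool → ℝ → Pt
  light : Bool → ℝ → C

namespace AsyncExec

variable {C : Type*}

/-- Own position recorded by robot `i` at its `k`-th Look. -/
noncomputable def myPos (E : AsyncExec C) (i : Bool) (k : ℕ) : Pt := E.pos i (E.look i k)

/-- The other robot's position recorded by robot `i` at its `k`-th Look. -/
noncomputable def obsPos (E : AsyncExec C) (i : Bool) (k : ℕ) : Pt := E.pos (!i) (E.look i k)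

/-- The other robot's light color recorded by robot `i` at its `k`-th Look. -/
noncomputable def obsCol (E : AsyncExec C) (i : Bool) (k : ℕ) : C := E.light (!i) (E.look i k)

/-- `E` is a legal asynchronous execution of the algorithm that, for robot `i`
at own position `p`, with recorded snapshot (other robot at `q` with color
`c`), prescribes the new color `algoCol i p q c` and destination
`algoDest i p q c`; with both lights initially `c0` and initial positions
`init`; `reach start dest endpt` is the constraint on the point `endpt` where
a Move from `start` toward `dest` is allowed to end (rigid or non-rigid). -/
structure IsLegal (algoCol : Bool → Pt → Pt → C → C) (algoDest : Bool → Pt → Pt → C → Pt)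
    (c0 : Bool → C) (init : Bool → Pt) (reach : Pt → Pt → Pt → Prop)
    (E : AsyncExec C) : Prop where
  /-- Look ≤ end of Compute ≤ end of Move < next Look. -/
  look_le_comp : ∀ i k, E.look i k ≤ E.compEnd i k
  comp_le_move : ∀ i k, E.compEnd i k ≤ E.moveEnd i k
  move_lt_look : ∀ i k, E.moveEnd i k < E.look i (k + 1)
  /-- Each robot performs infinitely many cycles, all of finite duration. -/
  look_tendsto : ∀ i, Filter.Tendsto (E.look i) Filter.atTop Filter.atTop
  /-- Before finishing its first Compute, a robot is at its initial position. -/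
  init_pos : ∀ i t, t ≤ E.compEnd i 0 → E.pos i t = init i
  /-- Before finishing its first Compute, a robot's light shows the initial color. -/
  init_light : ∀ i t, t < E.compEnd i 0 → E.light i t = c0 i
  /-- From the end of the Compute of cycle `k` until the end of the Compute of
  cycle `k+1`, the light shows the color computed from the snapshot of cycle `k`. -/
  light_set : ∀ i k t, E.compEnd i k ≤ t → t < E.compEnd i (k + 1) →
    E.light i t = algoCol i (E.myPos i k) (E.obsPos i k) (E.obsCol i k)
  /-- During the Move of cycle `k` the robot travels monotonically along the
  straight segment from its position toward the destination computed from the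
  snapshot of cycle `k`, and the endpoint of the Move satisfies `reach`. -/
  move : ∀ i k, ∃ f : ℝ → ℝ,
    MonotoneOn f (Set.Icc (E.compEnd i k) (E.moveEnd i k)) ∧
    f (E.compEnd i k) = 0 ∧
    (∀ t ∈ Set.Icc (E.compEnd i k) (E.moveEnd i k), 0 ≤ f t ∧ f t ≤ 1) ∧
    (∀ t ∈ Set.Icc (E.compEnd i k) (E.moveEnd i k),
      E.pos i t = E.myPos i k +
        f t • (algoDest i (E.myPos i k) (E.obsPos i k) (E.obsCol i k) - E.myPos i k)) ∧
    reach (E.myPos i k) (algoDest i (E.myPos i k) (E.obsPos i k) (E.obsCol i k))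
      (E.pos i (E.moveEnd i k))
  /-- A robot does not move between the end of a Move and the end of the
  Compute of its next cycle (in particular its position at the next Look is
  where its previous Move ended). -/
  still : ∀ i k t, E.moveEnd i k ≤ t → t ≤ E.compEnd i (k + 1) →
    E.pos i t = E.pos i (E.moveEnd i k)

end AsyncExec

/-- Rigid movements: every Move ends exactly at the computed destination. -/
def RigidReach : Pt → Pt → Pt → Prop := fun _ dest endpt => endpt = dest

/-- Non-rigid movements with parameter `δ`: every Move either ends at the
computed destination or covers a distance of at least `δ`. -/
def NonRigidReach (δ : ℝ) : Pt → Pt → Pt → Prop :=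
  fun start dest endpt => endpt = dest ∨ δ ≤ ‖endpt - start‖

/-- Rendezvous is solved: there is a time after which both robots occupy the
same point and never move again. -/
def SolvesAsync {C : Type*} (E : AsyncExec C) : Prop :=
  ∃ T : ℝ, ∀ t, T ≤ t →
    E.pos false t = E.pos false T ∧ E.pos true t = E.pos false T

noncomputable section
namespace FCimpl
variable (l : ℕ → ℝ)
def asym (j : ℕ) : Prop := l j = 1/2
instance : DecidablePred (asym l) := fun _ => Real.decidableEq _ _
def dd : ℕ → ℝ
  | 0 => 1
  | j+1 => (if asym l j then (-1/4 : ℝ) else 1 - 2 * l j) * dd j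
def rr : ℕ → ℝ
  | 0 => 0
  | j+1 => rr j + (if asym l j then 3/4 else l j) * dd l j
def ss : ℕ → ℝ
  | 0 => 1
  | j+1 => ss j - (if asym l j then 1/2 else l j) * dd l j
lemma dd_succ (j : ℕ) : dd l (j+1) = (if asym l j then (-1/4 : ℝ) else 1 - 2 * l j) * dd l j := rfl
lemma rr_succ (j : ℕ) : rr l (j+1) = rr l j + (if asym l j then 3/4 else l j) * dd l j := rfl
lemma ss_succ (j : ℕ) : ss l (j+1) = ss l j - (if asym l j then 1/2 else l j) * dd l j := rfl
lemma dd_ne (j : ℕ) : dd l j ≠ 0 := by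
  induction j with
  | zero => norm_num [dd]
  | succ j ih =>
    rw [dd_succ]
    refine mul_ne_zero ?_ ih
    split_ifs with h
    · norm_num
    · intro hc; exact h (by unfold asym; linarith)
lemma ss_sub_rr (j : ℕ) : ss l j - rr l j = dd l j := by
  induction j with
  | zero => norm_num [dd, rr, ss]
  | succ j ih =>
    rw [dd_succ, rr_succ, ss_succ]
    split_ifs with h <;> nlinarith [ih]

/-! thresholds -/
def jmpR (j : ℕ) : ℝ := if asym l j then 1 else 2
def jmpS (j : ℕ) : ℝ := if asym l j then 3 else 2
def thrR (j : ℕ) : ℝ := if asym l j then 1/2 else 1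
def thrS (j : ℕ) : ℝ := if asym l j then 5/2 else 1
lemma thrR_pos (j : ℕ) : 0 < thrR l j := by unfold thrR; split <;> norm_num
lemma thrR_le (j : ℕ) : thrR l j ≤ 1 := by unfold thrR; split <;> norm_num
lemma thrR_lt_jmpR (j : ℕ) : thrR l j < jmpR l j := by unfold thrR jmpR; split <;> norm_num
lemma one_le_jmpR (j : ℕ) : 1 ≤ jmpR l j := by unfold jmpR; split <;> norm_num
lemma jmpR_le (j : ℕ) : jmpR l j ≤ 2 := by unfold jmpR; split <;> norm_num
lemma thrS_pos (j : ℕ) : 0 < thrS l j := by unfold thrS; split <;> norm_num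
lemma thrS_le (j : ℕ) : thrS l j ≤ 5/2 := by unfold thrS; split <;> norm_num
lemma thrS_lt_jmpS (j : ℕ) : thrS l j < jmpS l j := by unfold thrS jmpS; split <;> norm_num
lemma two_le_jmpS (j : ℕ) : 2 ≤ jmpS l j := by unfold jmpS; split <;> norm_num
lemma jmpS_le (j : ℕ) : jmpS l j ≤ 3 := by unfold jmpS; split <;> norm_num

/-! floor lemmas -/
lemma floor4 {j : ℕ} {t : ℝ} (h1 : 4*(j:ℝ) ≤ t) (h2 : t < 4*(j:ℝ)+4) : ⌊t/4⌋₊ = j := by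
  have h0 : (0:ℝ) ≤ t/4 := by
    have : (0:ℝ) ≤ 4*(j:ℝ) := by positivity
    linarith
  rw [Nat.floor_eq_iff h0]  -- hope signature fits
  constructor <;> [linarith; linarith]
lemma floor4_zero {t : ℝ} (h : t < 4) : ⌊t/4⌋₊ = 0 :=
  Nat.floor_eq_zero.mpr (by linarith)

/-! generic step function -/
def stepf {α : Type*} (thr : ℕ → ℝ) (a : ℕ → α) (t : ℝ) : α :=
  if t < 4 * (⌊t/4⌋₊ : ℝ) + thr ⌊t/4⌋₊ then a ⌊t/4⌋₊ else a (⌊t/4⌋₊ + 1)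
lemma stepf_low {α : Type*} {thr : ℕ → ℝ} {a : ℕ → α} {j : ℕ} {t : ℝ} (h4 : thr j ≤ 4)
    (h1 : 4*(j:ℝ) ≤ t) (h2 : t < 4*(j:ℝ) + thr j) : stepf thr a t = a j := by
  have hj : ⌊t/4⌋₊ = j := floor4 h1 (by linarith)
  unfold stepf; rw [hj, if_pos h2]
lemma stepf_low0 {α : Type*} {thr : ℕ → ℝ} {a : ℕ → α} {t : ℝ} (h4 : thr 0 ≤ 4)
    (h2 : t < thr 0) : stepf thr a t = a 0 := by
  have hj : ⌊t/4⌋₊ = 0 := floor4_zero (by linarith)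
  unfold stepf; simp only [hj, Nat.cast_zero]
  rw [if_pos (by linarith)]
lemma stepf_high {α : Type*} {thr : ℕ → ℝ} {a : ℕ → α} {j : ℕ} {t : ℝ}
    (h0 : 0 ≤ thr j) (h4 : thr (j+1) ≤ 4)
    (h1 : 4*(j:ℝ) + thr j ≤ t) (h2 : t < 4*((j:ℝ)+1) + thr (j+1)) :
    stepf thr a t = a (j+1) := by
  rcases lt_or_ge t (4*(j:ℝ)+4) with h | h
  · have hj : ⌊t/4⌋₊ = j := floor4 (by linarith) h
    unfold stepf; rw [hj, if_neg (not_lt.2 h1)]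
  · exact stepf_low h4 (by push_cast; linarith) (by push_cast; linarith)

def S (t : ℝ) : ℝ := stepf (jmpS l) (ss l) t
def R (t : ℝ) : ℝ :=
  if t < 4 * (⌊t/4⌋₊ : ℝ) + jmpR l ⌊t/4⌋₊ then rr l ⌊t/4⌋₊
  else if asym l ⌊t/4⌋₊ ∧ t < 4 * (⌊t/4⌋₊ : ℝ) + 2 then rr l ⌊t/4⌋₊ + dd l ⌊t/4⌋₊ / 2
  else rr l (⌊t/4⌋₊ + 1)

lemma R_low {j : ℕ} {t : ℝ} (h1 : 4*(j:ℝ) ≤ t) (h2 : t < 4*(j:ℝ) + jmpR l j) :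
    R l t = rr l j := by
  have hj : ⌊t/4⌋₊ = j := floor4 h1 (by have := jmpR_le l j; linarith)
  unfold R; rw [hj, if_pos h2]
lemma R_low0 {t : ℝ} (h2 : t < jmpR l 0) : R l t = rr l 0 := by
  have hj : ⌊t/4⌋₊ = 0 := floor4_zero (by have := jmpR_le l 0; linarith)
  unfold R; simp only [hj, Nat.cast_zero]
  rw [if_pos (by linarith)]
lemma R_mid {j : ℕ} {t : ℝ} (ha : asym l j) (h1 : 4*(j:ℝ)+1 ≤ t) (h2 : t < 4*(j:ℝ)+2) :
    R l t = rr l j + dd l j / 2 := by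
  have hj : ⌊t/4⌋₊ = j := floor4 (by linarith) (by linarith)
  have hjm : jmpR l j = 1 := if_pos ha
  unfold R; rw [hj, if_neg (by rw [hjm]; exact not_lt.2 h1), if_pos ⟨ha, h2⟩]
lemma R_high {j : ℕ} {t : ℝ} (h1 : 4*(j:ℝ)+2 ≤ t) (h2 : t < 4*((j:ℝ)+1) + jmpR l (j+1)) :
    R l t = rr l (j+1) := by
  rcases lt_or_ge t (4*(j:ℝ)+4) with h | h
  · have hj : ⌊t/4⌋₊ = j := floor4 (by linarith) h
    have hjm : jmpR l j ≤ 2 := jmpR_le l j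
    unfold R
    rw [hj, if_neg (by intro hc; linarith), if_neg (by rintro ⟨-, hc⟩; linarith)]
  · exact R_low l (by push_cast; linarith) (by push_cast; linarith)

lemma S_low {j : ℕ} {t : ℝ} (h1 : 4*(j:ℝ) ≤ t) (h2 : t < 4*(j:ℝ) + jmpS l j) :
    S l t = ss l j := stepf_low (by have := jmpS_le l j; linarith) h1 h2
lemma S_low0 {t : ℝ} (h2 : t < jmpS l 0) : S l t = ss l 0 :=
  stepf_low0 (by have := jmpS_le l 0; linarith) h2
lemma S_high {j : ℕ} {t : ℝ} (h1 : 4*(j:ℝ) + jmpS l j ≤ t) (h2 : t < 4*((j:ℝ)+1) + jmpS l (j+1)) :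
    S l t = ss l (j+1) :=
  stepf_high (by have := two_le_jmpS l j; linarith) (by have := jmpS_le l (j+1); linarith) h1 h2

/-! light histories -/
variable {C : Type*}
def Lr (col : ℕ → C) (t : ℝ) : C := stepf (thrR l) col t
def Ls (col : ℕ → C) (t : ℝ) : C := stepf (thrS l) col t
lemma Lr_low {col : ℕ → C} {j : ℕ} {t : ℝ} (h1 : 4*(j:ℝ) ≤ t) (h2 : t < 4*(j:ℝ) + thrR l j) :
    Lr l col t = col j := stepf_low (by have := thrR_le l j; linarith) h1 h2
lemma Lr_low0 {col : ℕ → C} {t : ℝ} (h2 : t < thrR l 0) : Lr l col t = col 0 :=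
  stepf_low0 (by have := thrR_le l 0; linarith) h2
lemma Lr_high {col : ℕ → C} {j : ℕ} {t : ℝ} (h1 : 4*(j:ℝ) + thrR l j ≤ t)
    (h2 : t < 4*((j:ℝ)+1) + thrR l (j+1)) : Lr l col t = col (j+1) :=
  stepf_high (le_of_lt (thrR_pos l j)) (by have := thrR_le l (j+1); linarith) h1 h2
lemma Ls_low {col : ℕ → C} {j : ℕ} {t : ℝ} (h1 : 4*(j:ℝ) ≤ t) (h2 : t < 4*(j:ℝ) + thrS l j) :
    Ls l col t = col j := stepf_low (by have := thrS_le l j; linarith) h1 h2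
lemma Ls_low0 {col : ℕ → C} {t : ℝ} (h2 : t < thrS l 0) : Ls l col t = col 0 :=
  stepf_low0 (by have := thrS_le l 0; linarith) h2
lemma Ls_high {col : ℕ → C} {j : ℕ} {t : ℝ} (h1 : 4*(j:ℝ) + thrS l j ≤ t)
    (h2 : t < 4*((j:ℝ)+1) + thrS l (j+1)) : Ls l col t = col (j+1) :=
  stepf_high (le_of_lt (thrS_pos l j)) (by have := thrS_le l (j+1); linarith) h1 h2

/-! robot r scheduler -/
def g : ℕ → ℕ × Bool
  | 0 => (0, false)
  | k+1 => if (g k).2 = false ∧ asym l (g k).1 then ((g k).1, true) else ((g k).1 + 1, false)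
lemma g_zero : g l 0 = (0, false) := rfl
lemma g_succ (k : ℕ) : g l (k+1) =
    (if (g l k).2 = false ∧ asym l (g l k).1 then ((g l k).1, true) else ((g l k).1 + 1, false)) := rfl
lemma g_asym_of_true : ∀ k, (g l k).2 = true → asym l (g l k).1 := by
  intro k
  induction k with
  | zero => simp [g]
  | succ k ih =>
    rw [g_succ]
    split_ifs with h
    · exact fun _ => h.2
    · simp
lemma g_k_le (k : ℕ) : k ≤ 2 * (g l k).1 + (g l k).2.toNat := by
  induction k with
  | zero => simp
  | succ k ih =>
    rw [g_succ]
    split_ifs with h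
    · simp only [Bool.toNat_true]
      rw [h.1] at ih; simp at ih; omega
    · simp only [Bool.toNat_false]
      have : (g l k).2.toNat ≤ 1 := Bool.toNat_le _
      omega

/-! timelines for robot r (false) -/
def lookR (k : ℕ) : ℝ := 4*((g l k).1:ℝ) + (if (g l k).2 then 5/4 else 0)
def compR (k : ℕ) : ℝ := 4*((g l k).1:ℝ) + (if (g l k).2 then 3/2 else thrR l (g l k).1)
def movR (k : ℕ) : ℝ := 4*((g l k).1:ℝ) + (if (g l k).2 then 2 else jmpR l (g l k).1)

/-! points on the line -/
def pt (x : ℝ) : Pt := x • (EuclideanSpace.single (0 : Fin 2) (1:ℝ))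
lemma e_ne : (EuclideanSpace.single (0 : Fin 2) (1:ℝ)) ≠ 0 := by
  intro h
  have := congrArg (fun v : Pt => v 0) h
  simp [EuclideanSpace.single_apply] at this
lemma pt_inj : Function.Injective pt := smul_left_injective ℝ e_ne
lemma pt_affine (a b μ : ℝ) : pt a + μ • (pt b - pt a) = pt (a + μ * (b - a)) := by
  simp only [pt, ← sub_smul, smul_smul, ← add_smul]

lemma rr0 : rr l 0 = 0 := rfl
lemma ss0 : ss l 0 = 1 := rfl

/-! destination identities -/
lemma s_dest (j : ℕ) : ss l j + l j * (rr l j - ss l j) = ss l (j+1) := by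
  have h2 : rr l j - ss l j = - dd l j := by have := ss_sub_rr l j; linarith
  rw [ss_succ, h2]
  split_ifs with ha
  · rw [show l j = 1/2 from ha]; ring
  · ring
lemma r_dest_sync (j : ℕ) (ha : ¬ asym l j) :
    rr l j + l j * (ss l j - rr l j) = rr l (j+1) := by
  rw [rr_succ, if_neg ha, ss_sub_rr]
lemma r_dest_a1 (j : ℕ) (ha : asym l j) :
    rr l j + l j * (ss l j - rr l j) = rr l j + dd l j / 2 := by
  rw [ss_sub_rr, show l j = 1/2 from ha]; ring
lemma r_dest_a2 (j : ℕ) (ha : asym l j) :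
    (rr l j + dd l j / 2) + l j * (ss l j - (rr l j + dd l j / 2)) = rr l (j+1) := by
  have h := ss_sub_rr l j
  rw [rr_succ, if_pos ha, show l j = 1/2 from ha]
  linarith

/-! generic move witness -/
lemma seg_exists (cE mE : ℝ) (hlt : cE < mE) (p d : Pt) (pos : ℝ → Pt)
    (hconst : ∀ t, cE ≤ t → t < mE → pos t = p) (hend : pos mE = d) :
    ∃ f : ℝ → ℝ, MonotoneOn f (Set.Icc cE mE) ∧ f cE = 0 ∧
      (∀ t ∈ Set.Icc cE mE, 0 ≤ f t ∧ f t ≤ 1) ∧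
      (∀ t ∈ Set.Icc cE mE, pos t = p + f t • (d - p)) ∧
      RigidReach p d (pos mE) := by
  refine ⟨fun t => if mE ≤ t then 1 else 0, ?_, ?_, ?_, ?_, ?_⟩
  · intro a _ b _ hab; dsimp only
    by_cases h1 : mE ≤ a
    · rw [if_pos h1, if_pos (h1.trans hab)]
    · rw [if_neg h1]; split_ifs <;> norm_num
  · dsimp only; rw [if_neg (not_le.2 hlt)]
  · intro t _; dsimp only; split_ifs <;> norm_num
  · intro t ht; rw [Set.mem_Icc] at ht
    rcases ht.2.lt_or_eq with h | h
    · dsimp only; rw [if_neg (not_le.2 h), zero_smul, add_zero, hconst t ht.1 h]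
    · dsimp only; rw [h, hend, if_pos le_rfl, one_smul]; abel
  · show pos mE = d; exact hend

end FCimpl
end

open FCimpl in
/-- For every finite-communication algorithm of class 𝓛 — given by a color set
`C` of arbitrary cardinality, an initial color `c0`, and functions
`next : C → C` and `lam : C → ℝ`, prescribing that a robot at `p` whose
snapshot shows the other robot at `q` with color `c` sets its light to
`next c` and moves to `p + lam c • (q - p)` — Rendezvous is unsolvable in
ASynch with rigid movements: there exist distinct initial positions and a
legal fair asynchronous execution under which the two robots never occupy the
same point. -/
theorem fcomm_class_L_unsolvable_asynch {C : Type*} (c0 : C)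
    (next : C → C) (lam : C → ℝ) :
    ∃ (pr ps : Pt) (E : AsyncExec C), pr ≠ ps ∧
      E.IsLegal (fun _ _ _ c => next c) (fun _ p q c => p + lam c • (q - p))
        (fun _ => c0) (fun i => if i then ps else pr) RigidReach ∧
      ∀ t : ℝ, E.pos false t ≠ E.pos true t := by
  classical
  set col : ℕ → C := fun j => next^[j] c0 with hcoldef
  set l : ℕ → ℝ := fun j => lam (col j) with hldef
  have hnext : ∀ j, next (col j) = col (j+1) := fun j => (Function.iterate_succ_apply' next j c0).symm
  have hlam : ∀ j, lam (col j) = l j := fun j => rfl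
  refine ⟨pt 0, pt 1,
    { look := fun i k => cond i (4*(k:ℝ)) (lookR l k)
      compEnd := fun i k => cond i (4*(k:ℝ) + thrS l k) (compR l k)
      moveEnd := fun i k => cond i (4*(k:ℝ) + jmpS l k) (movR l k)
      pos := fun i t => cond i (pt (S l t)) (pt (R l t))
      light := fun i t => cond i (Ls l col t) (Lr l col t) }, ?_, ?_, ?_⟩
  · intro h
    have := pt_inj h
    norm_num at this
  · refine { look_le_comp := ?_, comp_le_move := ?_, move_lt_look := ?_,
             look_tendsto := ?_, init_pos := ?_, init_light := ?_,
             light_set := ?_, move := ?_, still := ?_ }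
    · -- look_le_comp
      intro i k
      cases i
      · show lookR l k ≤ compR l k
        unfold lookR compR
        cases hb : (g l k).2 <;> simp only [hb, Bool.false_eq_true, if_false, if_true]
        · have := thrR_pos l (g l k).1; linarith
        · norm_num
      · show 4*(k:ℝ) ≤ 4*(k:ℝ) + thrS l k
        have := thrS_pos l k; linarith
    · -- comp_le_move
      intro i k
      cases i
      · show compR l k ≤ movR l k
        unfold compR movR
        cases hb : (g l k).2 <;> simp only [hb, Bool.false_eq_true, if_false, if_true]
        · have := thrR_lt_jmpR l (g l k).1; linarith
        · norm_num
      · show 4*(k:ℝ) + thrS l k ≤ 4*(k:ℝ) + jmpS l k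
        have := thrS_lt_jmpS l k; linarith
    · -- move_lt_look
      intro i k
      cases i
      · show movR l k < lookR l (k+1)
        unfold movR lookR
        rw [g_succ]
        cases hb : (g l k).2
        · by_cases ha : asym l (g l k).1
          · simp [ha, jmpR]
            norm_num
          · simp [ha, jmpR]
            push_cast
            linarith
        · simp
          push_cast
          linarith
      · show 4*(k:ℝ) + jmpS l k < 4*(((k+1):ℕ):ℝ)
        have := jmpS_le l k
        push_cast
        linarith
    · -- look_tendsto
      intro i
      cases i
      · show Filter.Tendsto (fun k => lookR l k) Filter.atTop Filter.atTop
        have hlb : ∀ k : ℕ, 2*(k:ℝ) - 2 ≤ lookR l k := by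
          intro k
          have h1 := g_k_le l k
          have h2 : (g l k).2.toNat ≤ 1 := Bool.toNat_le _
          have h3 : (k:ℝ) ≤ 2*(((g l k).1):ℝ) + 1 := by
            have : k ≤ 2*(g l k).1 + 1 := by omega
            exact_mod_cast this
          unfold lookR
          have h4 : (0:ℝ) ≤ (if (g l k).2 then (5/4:ℝ) else 0) := by split <;> norm_num
          linarith
        have h2k : Filter.Tendsto (fun k : ℕ => 2*(k:ℝ)) Filter.atTop Filter.atTop :=
          Filter.tendsto_atTop_mono
            (fun k => by have : (0:ℝ) ≤ (k:ℝ) := Nat.cast_nonneg k; linarith)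
            tendsto_natCast_atTop_atTop
        have hbase : Filter.Tendsto (fun k : ℕ => 2*(k:ℝ) - 2) Filter.atTop Filter.atTop := by
          simpa [sub_eq_add_neg] using
            Filter.tendsto_atTop_add_const_right Filter.atTop (-2:ℝ) h2k
        exact Filter.tendsto_atTop_mono hlb hbase
      · show Filter.Tendsto (fun k : ℕ => 4*(k:ℝ)) Filter.atTop Filter.atTop
        exact Filter.tendsto_atTop_mono
          (fun k => by have : (0:ℝ) ≤ (k:ℝ) := Nat.cast_nonneg k; linarith)
          tendsto_natCast_atTop_atTop
    · -- init_pos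
      intro i t ht
      cases i
      · replace ht : t ≤ compR l 0 := ht
        rw [show compR l 0 = thrR l 0 from by unfold compR; rw [g_zero]; simp] at ht
        show pt (R l t) = pt 0
        rw [← rr0 l, R_low0 l (by have := thrR_lt_jmpR l 0; linarith)]
      · replace ht : t ≤ 4*((0:ℕ):ℝ) + thrS l 0 := ht
        norm_num at ht
        show pt (S l t) = pt 1
        rw [← ss0 l, S_low0 l (by have := thrS_lt_jmpS l 0; linarith)]
    · -- init_light
      intro i t ht
      cases i
      · replace ht : t < compR l 0 := ht
        rw [show compR l 0 = thrR l 0 from by unfold compR; rw [g_zero]; simp] at ht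
        show Lr l col t = c0
        rw [Lr_low0 l ht]
        rfl
      · replace ht : t < 4*((0:ℕ):ℝ) + thrS l 0 := ht
        norm_num at ht
        show Ls l col t = c0
        rw [Ls_low0 l ht]
        rfl
    · -- light_set
      intro i k t h1 h2
      simp only [AsyncExec.myPos, AsyncExec.obsPos, AsyncExec.obsCol]
      cases i
      · replace h1 : compR l k ≤ t := h1
        replace h2 : t < compR l (k+1) := h2
        show Lr l col t = next (Ls l col (lookR l k))
        cases hb : (g l k).2
        · rw [show lookR l k = 4*(((g l k).1):ℝ) from by unfold lookR; rw [hb]; norm_num]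
          rw [Ls_low l le_rfl (by have := thrS_pos l (g l k).1; linarith), hnext]
          rw [show compR l k = 4*(((g l k).1):ℝ) + thrR l (g l k).1 from by
            unfold compR; rw [hb]; norm_num] at h1
          by_cases ha : asym l (g l k).1
          · rw [show compR l (k+1) = 4*(((g l k).1):ℝ) + 3/2 from by
              unfold compR; rw [g_succ, hb]; simp [ha]] at h2
            exact Lr_high l h1 (by have := thrR_pos l ((g l k).1+1); push_cast; linarith)
          · rw [show compR l (k+1) = 4*((((g l k).1+1):ℕ):ℝ) + thrR l ((g l k).1+1) from by
              unfold compR; rw [g_succ, hb]; simp [ha]] at h2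
            exact Lr_high l h1 (by push_cast at h2 ⊢; linarith)
        · have ha := g_asym_of_true l k hb
          rw [show lookR l k = 4*(((g l k).1):ℝ) + 5/4 from by unfold lookR; rw [hb]; norm_num]
          rw [Ls_low l (j := (g l k).1) (by linarith)
            (by rw [show thrS l (g l k).1 = 5/2 from if_pos ha]; linarith), hnext]
          rw [show compR l k = 4*(((g l k).1):ℝ) + 3/2 from by
            unfold compR; rw [hb]; norm_num] at h1
          rw [show compR l (k+1) = 4*((((g l k).1+1):ℕ):ℝ) + thrR l ((g l k).1+1) from by
            unfold compR; rw [g_succ, hb]; simp] at h2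
          refine Lr_high l ?_ (by push_cast at h2 ⊢; linarith)
          have := thrR_le l (g l k).1
          linarith
      · replace h1 : 4*(k:ℝ) + thrS l k ≤ t := h1
        replace h2 : t < 4*(((k+1):ℕ):ℝ) + thrS l (k+1) := h2
        show Ls l col t = next (Lr l col (4*(k:ℝ)))
        rw [Lr_low l le_rfl (by have := thrR_pos l k; linarith), hnext]
        exact Ls_high l h1 (by push_cast at h2 ⊢; linarith)
    · -- move
      intro i k
      simp only [AsyncExec.myPos, AsyncExec.obsPos, AsyncExec.obsCol]
      cases i
      · show ∃ f : ℝ → ℝ,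
          MonotoneOn f (Set.Icc (compR l k) (movR l k)) ∧ f (compR l k) = 0 ∧
          (∀ t ∈ Set.Icc (compR l k) (movR l k), 0 ≤ f t ∧ f t ≤ 1) ∧
          (∀ t ∈ Set.Icc (compR l k) (movR l k),
            pt (R l t) = pt (R l (lookR l k)) +
              f t • ((pt (R l (lookR l k)) + lam (Ls l col (lookR l k)) •
                (pt (S l (lookR l k)) - pt (R l (lookR l k)))) - pt (R l (lookR l k)))) ∧
          RigidReach (pt (R l (lookR l k)))
            (pt (R l (lookR l k)) + lam (Ls l col (lookR l k)) •
              (pt (S l (lookR l k)) - pt (R l (lookR l k)))) (pt (R l (movR l k)))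
        cases hb : (g l k).2
        · have hlk : lookR l k = 4*(((g l k).1):ℝ) := by unfold lookR; rw [hb]; norm_num
          rw [hlk, R_low l le_rfl (by have := one_le_jmpR l (g l k).1; linarith),
            S_low l le_rfl (by have := two_le_jmpS l (g l k).1; linarith),
            Ls_low l le_rfl (by have := thrS_pos l (g l k).1; linarith),
            hlam, pt_affine]
          by_cases ha : asym l (g l k).1
          · rw [show compR l k = 4*(((g l k).1):ℝ) + 1/2 from by
                unfold compR; rw [hb]; simp [thrR, ha],
              show movR l k = 4*(((g l k).1):ℝ) + 1 from by
                unfold movR; rw [hb]; simp [jmpR, ha],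
              r_dest_a1 l _ ha]
            refine seg_exists _ _ (by linarith) _ _ (fun u => pt (R l u)) ?_ ?_
            · intro u hu1 hu2
              rw [R_low l (by linarith)
                (by rw [show jmpR l (g l k).1 = 1 from if_pos ha]; linarith)]
            · rw [R_mid l ha (by linarith) (by linarith)]
          · rw [show compR l k = 4*(((g l k).1):ℝ) + 1 from by
                unfold compR; rw [hb]; simp [thrR, ha],
              show movR l k = 4*(((g l k).1):ℝ) + 2 from by
                unfold movR; rw [hb]; simp [jmpR, ha],
              r_dest_sync l _ ha]
            refine seg_exists _ _ (by linarith) _ _ (fun u => pt (R l u)) ?_ ?_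
            · intro u hu1 hu2
              rw [R_low l (by linarith)
                (by rw [show jmpR l (g l k).1 = 2 from if_neg ha]; linarith)]
            · rw [R_high l le_rfl (by have := one_le_jmpR l ((g l k).1+1); push_cast; linarith)]
        · have ha := g_asym_of_true l k hb
          have hlk : lookR l k = 4*(((g l k).1):ℝ) + 5/4 := by unfold lookR; rw [hb]; norm_num
          rw [hlk, R_mid l ha (by linarith) (by linarith),
            S_low l (j := (g l k).1) (by linarith)
              (by rw [show jmpS l (g l k).1 = 3 from if_pos ha]; linarith),
            Ls_low l (j := (g l k).1) (by linarith)
              (by rw [show thrS l (g l k).1 = 5/2 from if_pos ha]; linarith),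
            hlam, pt_affine,
            show compR l k = 4*(((g l k).1):ℝ) + 3/2 from by unfold compR; rw [hb]; norm_num,
            show movR l k = 4*(((g l k).1):ℝ) + 2 from by unfold movR; rw [hb]; norm_num,
            r_dest_a2 l _ ha]
          refine seg_exists _ _ (by linarith) _ _ (fun u => pt (R l u)) ?_ ?_
          · intro u hu1 hu2
            rw [R_mid l ha (by linarith) (by linarith)]
          · rw [R_high l le_rfl (by have := one_le_jmpR l ((g l k).1+1); push_cast; linarith)]
      · show ∃ f : ℝ → ℝ,
          MonotoneOn f (Set.Icc (4*(k:ℝ) + thrS l k) (4*(k:ℝ) + jmpS l k)) ∧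
          f (4*(k:ℝ) + thrS l k) = 0 ∧
          (∀ t ∈ Set.Icc (4*(k:ℝ) + thrS l k) (4*(k:ℝ) + jmpS l k), 0 ≤ f t ∧ f t ≤ 1) ∧
          (∀ t ∈ Set.Icc (4*(k:ℝ) + thrS l k) (4*(k:ℝ) + jmpS l k),
            pt (S l t) = pt (S l (4*(k:ℝ))) +
              f t • ((pt (S l (4*(k:ℝ))) + lam (Lr l col (4*(k:ℝ))) •
                (pt (R l (4*(k:ℝ))) - pt (S l (4*(k:ℝ))))) - pt (S l (4*(k:ℝ))))) ∧
          RigidReach (pt (S l (4*(k:ℝ))))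
            (pt (S l (4*(k:ℝ))) + lam (Lr l col (4*(k:ℝ))) •
              (pt (R l (4*(k:ℝ))) - pt (S l (4*(k:ℝ))))) (pt (S l (4*(k:ℝ) + jmpS l k)))
        rw [S_low l le_rfl (by have := two_le_jmpS l k; linarith),
          R_low l le_rfl (by have := one_le_jmpR l k; linarith),
          Lr_low l le_rfl (by have := thrR_pos l k; linarith),
          hlam, pt_affine, s_dest l k]
        have hts := thrS_lt_jmpS l k
        have hts2 := thrS_pos l k
        refine seg_exists _ _ (by linarith) _ _ (fun u => pt (S l u)) ?_ ?_
        · intro u hu1 hu2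
          rw [S_low l (j := k) (by linarith) (by linarith)]
        · rw [S_high l le_rfl
            (by have := jmpS_le l k; have := two_le_jmpS l (k+1); push_cast; linarith)]
    · -- still
      intro i k t h1 h2
      cases i
      · replace h1 : movR l k ≤ t := h1
        replace h2 : t ≤ compR l (k+1) := h2
        show pt (R l t) = pt (R l (movR l k))
        cases hb : (g l k).2
        · by_cases ha : asym l (g l k).1
          · rw [show movR l k = 4*(((g l k).1):ℝ) + 1 from by
              unfold movR; rw [hb]; simp [jmpR, ha]] at h1 ⊢
            rw [show compR l (k+1) = 4*(((g l k).1):ℝ) + 3/2 from by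
              unfold compR; rw [g_succ, hb]; simp [ha]] at h2
            rw [R_mid l ha h1 (by linarith), R_mid l ha le_rfl (by linarith)]
          · rw [show movR l k = 4*(((g l k).1):ℝ) + 2 from by
              unfold movR; rw [hb]; simp [jmpR, ha]] at h1 ⊢
            rw [show compR l (k+1) = 4*((((g l k).1+1):ℕ):ℝ) + thrR l ((g l k).1+1) from by
              unfold compR; rw [g_succ, hb]; simp [ha]] at h2
            have hth := thrR_lt_jmpR l ((g l k).1+1)
            rw [R_high l h1 (by push_cast at h2 ⊢; linarith),
              R_high l le_rfl (by have := one_le_jmpR l ((g l k).1+1); push_cast; linarith)]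
        · rw [show movR l k = 4*(((g l k).1):ℝ) + 2 from by
            unfold movR; rw [hb]; norm_num] at h1 ⊢
          rw [show compR l (k+1) = 4*((((g l k).1+1):ℕ):ℝ) + thrR l ((g l k).1+1) from by
            unfold compR; rw [g_succ, hb]; simp] at h2
          have hth := thrR_lt_jmpR l ((g l k).1+1)
          rw [R_high l h1 (by push_cast at h2 ⊢; linarith),
            R_high l le_rfl (by have := one_le_jmpR l ((g l k).1+1); push_cast; linarith)]
      · replace h1 : 4*(k:ℝ) + jmpS l k ≤ t := h1
        replace h2 : t ≤ 4*(((k+1):ℕ):ℝ) + thrS l (k+1) := h2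
        show pt (S l t) = pt (S l (4*(k:ℝ) + jmpS l k))
        have h3 := thrS_lt_jmpS l (k+1)
        have h4 := jmpS_le l k
        have h5 := two_le_jmpS l (k+1)
        rw [S_high l h1 (by push_cast at h2 ⊢; linarith),
          S_high l le_rfl (by push_cast; linarith)]
  · have hne : ∀ t : ℝ, R l t ≠ S l t := by
      intro t
      rcases lt_or_ge t 0 with ht | ht
      · rw [R_low0 l (lt_of_lt_of_le ht (by have := one_le_jmpR l 0; linarith)),
            S_low0 l (lt_of_lt_of_le ht (by have := two_le_jmpS l 0; linarith)),
            rr0, ss0]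
        norm_num
      · obtain ⟨j, hb1, hb2⟩ : ∃ j : ℕ, 4*(j:ℝ) ≤ t ∧ t < 4*(j:ℝ)+4 := by
          refine ⟨⌊t/4⌋₊, ?_, ?_⟩
          · have := Nat.floor_le (show (0:ℝ) ≤ t/4 by linarith)
            linarith
          · have := Nat.lt_floor_add_one (t/4)
            linarith
        have hd := dd_ne l j
        have hd1 := dd_ne l (j+1)
        have hsr := ss_sub_rr l j
        have hsr1 := ss_sub_rr l (j+1)
        by_cases ha : asym l j
        · have hjR : jmpR l j = 1 := if_pos ha
          have hjS : jmpS l j = 3 := if_pos ha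
          have hrs : rr l (j+1) = rr l j + 3/4 * dd l j := by
            rw [rr_succ, if_pos ha]
          rcases lt_or_ge t (4*(j:ℝ)+1) with h1 | h1
          · rw [R_low l hb1 (by rw [hjR]; exact h1), S_low l hb1 (by rw [hjS]; linarith)]
            intro h; exact hd (by linarith)
          · rcases lt_or_ge t (4*(j:ℝ)+2) with h2 | h2
            · rw [R_mid l ha h1 h2, S_low l hb1 (by rw [hjS]; linarith)]
              intro h; exact hd (by linarith)
            · rcases lt_or_ge t (4*(j:ℝ)+3) with h3 | h3
              · rw [R_high l h2 (by have := one_le_jmpR l (j+1); linarith),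
                    S_low l hb1 (by rw [hjS]; linarith)]
                intro h; rw [hrs] at h; exact hd (by linarith)
              · rw [R_high l h2 (by have := one_le_jmpR l (j+1); linarith),
                    S_high l (by rw [hjS]; linarith) (by have := two_le_jmpS l (j+1); linarith)]
                intro h; exact hd1 (by linarith)
        · have hjR : jmpR l j = 2 := if_neg ha
          have hjS : jmpS l j = 2 := if_neg ha
          rcases lt_or_ge t (4*(j:ℝ)+2) with h2 | h2
          · rw [R_low l hb1 (by rw [hjR]; exact h2), S_low l hb1 (by rw [hjS]; exact h2)]
            intro h; exact hd (by linarith)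
          · rw [R_high l h2 (by have := one_le_jmpR l (j+1); linarith),
                S_high l (by rw [hjS]; exact h2) (by have := two_le_jmpS l (j+1); linarith)]
            intro h; exact hd1 (by linarith)
    intro t h
    exact hne t (pt_inj h)
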